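/- Let Γ be a countable group acting on a countable set K, let λ denote the left-regular unitary representation of Γ on ℓ²(Γ) and σ_K the permutation unitary representation of Γ on ℓ²(K) given by σ_K(s)δ_x = δ_{s·x}. Let V : ℓ²(K) → ℓ²(Γ) be a linear isometry such that for every s ∈ Γ the operator V*λ(s)V − σ_K(s) on ℓ²(K) is compact. For x ∈ K define μ_x ∈ ℓ¹(Γ) by μ_x(t) = |(Vδ_x)(t)|². Then each μ_x belongs to Prob(Γ), and for every s ∈ Γ, ‖s·μ_x − μ_{s·x}‖₁ → 0 as x → ∞ along the cofinite filter on K. -/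

import Mathlib

open Filter lp
open scoped ENNReal

section auxlems

lemma aux_norm_sq {I : Type*} {E : I → Type*} [∀ i, NormedAddCommGroup (E i)]
    (f : lp E 2) : ‖f‖ ^ 2 = ∑' t, ‖f t‖ ^ 2 := by
  have h := lp.norm_rpow_eq_tsum (p := 2) (by norm_num) f
  have h2 : ((2 : ℝ≥0∞).toReal) = (2 : ℝ) := by norm_num
  rw [h2] at h
  calc ‖f‖ ^ 2 = ‖f‖ ^ (2:ℝ) := by rw [← Real.rpow_natCast]; norm_num
    _ = ∑' t, ‖f t‖ ^ (2:ℝ) := h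
    _ = ∑' t, ‖f t‖ ^ 2 := by
        refine tsum_congr fun t => ?_
        rw [← Real.rpow_natCast]; norm_num

lemma aux_summable_sq {I : Type*} {E : I → Type*} [∀ i, NormedAddCommGroup (E i)]
    (f : lp E 2) : Summable (fun t => ‖f t‖ ^ 2) := by
  have h := (lp.memℓp f).summable (p := 2) (by norm_num)
  refine h.congr fun t => ?_
  rw [← Real.rpow_natCast]; norm_num

lemma aux_memℓp_norm {I : Type*} {E : I → Type*} [∀ i, NormedAddCommGroup (E i)]
    (f : lp E 2) : Memℓp (fun t => ‖f t‖) (2 : ℝ≥0∞) := by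
  apply memℓp_gen
  refine (aux_summable_sq f).congr fun t => ?_
  have h2 : ((2 : ℝ≥0∞).toReal) = (2 : ℝ) := by norm_num
  rw [h2, norm_norm, ← Real.rpow_natCast]; norm_num

lemma aux_norm_normlp {I : Type*} {E : I → Type*} [∀ i, NormedAddCommGroup (E i)]
    (f : lp E 2) :
    ‖(⟨fun t => ‖f t‖, aux_memℓp_norm f⟩ : lp (fun _ : I => ℝ) 2)‖ = ‖f‖ := by
  set F : lp (fun _ : I => ℝ) 2 := ⟨fun t => ‖f t‖, aux_memℓp_norm f⟩
  have h1 : ‖F‖ ^ 2 = ‖f‖ ^ 2 := by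
    rw [aux_norm_sq, aux_norm_sq f]
    exact tsum_congr fun t => by simp [F]
  rw [← Real.sqrt_sq (norm_nonneg F), h1, Real.sqrt_sq (norm_nonneg f)]

lemma aux_cs {I : Type*} (f g : lp (fun _ : I => ℂ) 2) :
    Summable (fun t => |‖f t‖ ^ 2 - ‖g t‖ ^ 2|) ∧
      ∑' t, |‖f t‖ ^ 2 - ‖g t‖ ^ 2| ≤ (‖f‖ + ‖g‖) * ‖f - g‖ := by
  set Ff : lp (fun _ : I => ℝ) 2 := ⟨fun t => ‖f t‖, aux_memℓp_norm f⟩ with hFf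
  set Fg : lp (fun _ : I => ℝ) 2 := ⟨fun t => ‖g t‖, aux_memℓp_norm g⟩ with hFg
  set D : lp (fun _ : I => ℝ) 2 := ⟨fun t => ‖(f - g) t‖, aux_memℓp_norm (f - g)⟩ with hD
  set F : lp (fun _ : I => ℝ) 2 := Ff + Fg with hF
  have hFapp : ∀ t, F t = ‖f t‖ + ‖g t‖ := by
    intro t
    have := lp.coeFn_add Ff Fg
    calc F t = (Ff + Fg) t := rfl
      _ = Ff t + Fg t := by rw [this]; rfl
      _ = ‖f t‖ + ‖g t‖ := rfl
  have hDapp : ∀ t, D t = ‖f t - g t‖ := by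
    intro t
    have := lp.coeFn_sub f g
    calc D t = ‖(f - g) t‖ := rfl
      _ = ‖f t - g t‖ := by rw [this]; rfl
  have hsum : Summable (fun t => F t * D t) := by
    have := lp.summable_inner (𝕜 := ℝ) F D
    refine this.congr fun t => ?_
    simp [RCLike.inner_apply, mul_comm]
  have hptwise : ∀ t, |‖f t‖ ^ 2 - ‖g t‖ ^ 2| ≤ F t * D t := by
    intro t
    rw [hFapp, hDapp]
    have h1 : ‖f t‖ ^ 2 - ‖g t‖ ^ 2 = (‖f t‖ - ‖g t‖) * (‖f t‖ + ‖g t‖) := by ring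
    rw [h1, abs_mul, abs_of_nonneg (by positivity : (0:ℝ) ≤ ‖f t‖ + ‖g t‖)]
    have h2 : |‖f t‖ - ‖g t‖| ≤ ‖f t - g t‖ := abs_norm_sub_norm_le _ _
    nlinarith [norm_nonneg (f t - g t), norm_nonneg (f t), norm_nonneg (g t),
      abs_nonneg (‖f t‖ - ‖g t‖)]
  have hsum1 : Summable (fun t => |‖f t‖ ^ 2 - ‖g t‖ ^ 2|) :=
    Summable.of_nonneg_of_le (fun t => abs_nonneg _) hptwise hsum
  refine ⟨hsum1, ?_⟩
  have step1 : ∑' t, |‖f t‖ ^ 2 - ‖g t‖ ^ 2| ≤ ∑' t, F t * D t :=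
    Summable.tsum_le_tsum hptwise hsum1 hsum
  have step2 : ∑' t, F t * D t = (inner ℝ F D : ℝ) := by
    rw [lp.inner_eq_tsum]
    exact tsum_congr fun t => by simp [RCLike.inner_apply, mul_comm]
  have step3 : (inner ℝ F D : ℝ) ≤ ‖F‖ * ‖D‖ := real_inner_le_norm F D
  have hFnorm : ‖F‖ ≤ ‖f‖ + ‖g‖ := by
    calc ‖F‖ ≤ ‖Ff‖ + ‖Fg‖ := norm_add_le _ _
      _ = ‖f‖ + ‖g‖ := by rw [aux_norm_normlp f, aux_norm_normlp g]
  have hDnorm : ‖D‖ = ‖f - g‖ := aux_norm_normlp (f - g)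
  calc ∑' t, |‖f t‖ ^ 2 - ‖g t‖ ^ 2| ≤ (inner ℝ F D : ℝ) := by rw [← step2]; exact step1
    _ ≤ ‖F‖ * ‖D‖ := step3
    _ ≤ (‖f‖ + ‖g‖) * ‖f - g‖ := by
        rw [hDnorm]
        exact mul_le_mul_of_nonneg_right hFnorm (norm_nonneg _)

lemma aux_finite {I : Type*} (η : lp (fun _ : I => ℂ) 2) {ε : ℝ} (hε : 0 < ε) :
    {y : I | ε ≤ ‖η y‖}.Finite := by
  have hs := (aux_summable_sq η).tendsto_cofinite_zero
  have hev : ∀ᶠ y in cofinite, ‖η y‖ ^ 2 < ε ^ 2 :=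
    hs.eventually (gt_mem_nhds (by positivity))
  refine (Filter.eventually_cofinite.mp hev).subset ?_
  intro y hy
  simp only [Set.mem_setOf_eq] at hy ⊢
  intro hlt
  exact absurd (pow_le_pow_left₀ hε.le hy 2) (not_le.mpr hlt)

lemma aux_cpt {Γ K : Type*} [Group Γ] [DecidableEq Γ] [DecidableEq K] [MulAction Γ K]
    (s : Γ)
    (T : lp (fun _ : K => ℂ) 2 →L[ℂ] lp (fun _ : K => ℂ) 2)
    (hT : IsCompactOperator T) :
    Tendsto (fun x : K =>
      ‖(inner ℂ (T (lp.single 2 x 1)) (lp.single 2 (s • x) (1:ℂ)) : ℂ)‖) cofinite (nhds 0) := by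
  set e : K → lp (fun _ : K => ℂ) 2 := fun x => lp.single 2 x (1:ℂ) with he
  have hnorme : ∀ x, ‖e x‖ = 1 := by
    intro x
    have := lp.norm_single (p := 2) (E := fun _ : K => ℂ) (by norm_num) x (1:ℂ)
    simpa [he] using this
  obtain ⟨C, hC, hCmem⟩ := hT
  obtain ⟨r, hr, hball⟩ := Metric.mem_nhds_iff.mp hCmem
  rw [Metric.tendsto_nhds]
  intro ε hε
  rw [Filter.eventually_cofinite]
  obtain ⟨F, hFfin, hFcov⟩ :=
    (Metric.totallyBounded_iff.mp hC.totallyBounded) ((r/2) * (ε/2)) (by positivity)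
  have key : {x : K | ¬ dist ‖(inner ℂ (T (e x)) (e (s • x)) : ℂ)‖ 0 < ε} ⊆
      ⋃ c ∈ F, {x : K | ε/2 ≤ ‖(((2/r : ℝ) : ℂ) • c) (s • x)‖} := by
    intro x hx
    simp only [Set.mem_setOf_eq, Real.dist_eq, sub_zero, not_lt,
      abs_of_nonneg (norm_nonneg _)] at hx
    have hmem : ((r/2 : ℝ) : ℂ) • T (e x) ∈ C := by
      have h1 : ((r/2 : ℝ) : ℂ) • e x ∈ Metric.ball (0 : lp (fun _ : K => ℂ) 2) r := by
        rw [Metric.mem_ball, dist_zero_right, norm_smul, hnorme]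
        simp only [Complex.norm_real, Real.norm_eq_abs, mul_one]
        rw [abs_of_pos (by positivity)]
        linarith
      have := hball h1
      rwa [Set.mem_preimage, map_smul] at this
    obtain ⟨c, hcF, hdist⟩ := Set.mem_iUnion₂.mp (hFcov hmem)
    set η : lp (fun _ : K => ℂ) 2 := ((2/r : ℝ) : ℂ) • c with hη
    have hr' : (r : ℝ) ≠ 0 := ne_of_gt hr
    have h1 : ‖T (e x) - η‖ < ε/2 := by
      have heq : T (e x) - η = ((2/r : ℝ) : ℂ) • (((r/2 : ℝ) : ℂ) • T (e x) - c) := by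
        rw [smul_sub, smul_smul, hη]
        congr 1
        rw [← Complex.ofReal_mul]
        have : (2/r) * (r/2) = 1 := by field_simp
        rw [this, Complex.ofReal_one, one_smul]
      have hd : ‖((r/2 : ℝ) : ℂ) • T (e x) - c‖ < (r/2) * (ε/2) := by
        rw [Metric.mem_ball] at hdist
        rwa [← dist_eq_norm]
      rw [heq, norm_smul]
      simp only [Complex.norm_real, Real.norm_eq_abs]
      rw [abs_of_pos (by positivity : (0:ℝ) < 2/r)]
      calc (2/r) * ‖((r/2 : ℝ) : ℂ) • T (e x) - c‖
          < (2/r) * ((r/2) * (ε/2)) := mul_lt_mul_of_pos_left hd (by positivity)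
        _ = ε/2 := by field_simp
    have h2 : ‖(inner ℂ (T (e x)) (e (s • x)) : ℂ)‖
        ≤ ‖T (e x) - η‖ * ‖e (s • x)‖ + ‖η (s • x)‖ := by
      have hsplit : (inner ℂ (T (e x)) (e (s • x)) : ℂ)
          = inner ℂ (T (e x) - η) (e (s • x)) + inner ℂ η (e (s • x)) := by
        rw [inner_sub_left]; ring
      rw [hsplit]
      refine (norm_add_le _ _).trans ?_
      have hb1 : ‖(inner ℂ (T (e x) - η) (e (s • x)) : ℂ)‖ ≤ ‖T (e x) - η‖ * ‖e (s • x)‖ :=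
        norm_inner_le_norm _ _
      have hb2 : ‖(inner ℂ η (e (s • x)) : ℂ)‖ = ‖η (s • x)‖ := by
        have := lp.inner_single_right (𝕜 := ℂ) (s • x) (1 : ℂ) η
        rw [he]
        simp only []
        rw [this]
        simp [RCLike.inner_apply]
      rw [hb2]
      exact add_le_add hb1 le_rfl
    have h3 : ε/2 ≤ ‖η (s • x)‖ := by
      rw [hnorme, mul_one] at h2
      linarith
    exact Set.mem_iUnion₂.mpr ⟨c, hcF, h3⟩
  refine Set.Finite.subset ?_ key
  refine Set.Finite.biUnion hFfin fun c _ => ?_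
  have : {x : K | ε/2 ≤ ‖(((2/r : ℝ) : ℂ) • c) (s • x)‖}
      = (fun x : K => s • x) ⁻¹' {y : K | ε/2 ≤ ‖(((2/r : ℝ) : ℂ) • c) y‖} := rfl
  rw [this]
  exact (aux_finite _ (half_pos hε)).preimage ((MulAction.injective s).injOn)

end auxlems

theorem stmt9 {Γ K : Type*} [Group Γ] [Countable Γ] [Countable K] [DecidableEq Γ] [DecidableEq K] [MulAction Γ K]
    (V : lp (fun _ : K => ℂ) 2 →ₗᵢ[ℂ] lp (fun _ : Γ => ℂ) 2)
    (lam : Γ → (lp (fun _ : Γ => ℂ) 2 →L[ℂ] lp (fun _ : Γ => ℂ) 2))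
    (hlam : ∀ (s : Γ) (ξ : lp (fun _ : Γ => ℂ) 2) (t : Γ), (lam s ξ) t = ξ (s⁻¹ * t))
    (σK : Γ → (lp (fun _ : K => ℂ) 2 →L[ℂ] lp (fun _ : K => ℂ) 2))
    (hσK : ∀ (s : Γ) (x : K), σK s (lp.single 2 x 1) = lp.single 2 (s • x) 1)
    (hcpt : ∀ s : Γ, IsCompactOperator
      ((ContinuousLinearMap.adjoint V.toContinuousLinearMap).comp
        ((lam s).comp V.toContinuousLinearMap) - σK s))
    (μ : K → Γ → ℝ)
    (hμ : ∀ x t, μ x t = ‖(V (lp.single 2 x 1)) t‖ ^ 2) :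
    (∀ x, (∀ t, 0 ≤ μ x t) ∧ Summable (μ x) ∧ (∑' t, μ x t) = 1) ∧
    (∀ s : Γ,
      Tendsto (fun x : K => ∑' t, |μ x (s⁻¹ * t) - μ (s • x) t|) cofinite (nhds 0)) := by
  classical
  have hnorme : ∀ x : K, ‖(lp.single 2 x (1:ℂ) : lp (fun _ : K => ℂ) 2)‖ = 1 := by
    intro x
    have := lp.norm_single (p := 2) (E := fun _ : K => ℂ) (by norm_num) x (1:ℂ)
    simpa using this
  have ha : ∀ x : K, ‖V (lp.single 2 x 1)‖ = 1 := fun x => by rw [V.norm_map, hnorme]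
  constructor
  · intro x
    refine ⟨fun t => by rw [hμ]; positivity, ?_, ?_⟩
    · exact (aux_summable_sq (V (lp.single 2 x 1))).congr fun t => (hμ x t).symm
    · calc ∑' t, μ x t = ∑' t, ‖(V (lp.single 2 x 1)) t‖ ^ 2 := tsum_congr (hμ x)
        _ = ‖V (lp.single 2 x 1)‖ ^ 2 := (aux_norm_sq _).symm
        _ = 1 := by rw [ha x]; norm_num
  · intro s
    set Top := (ContinuousLinearMap.adjoint V.toContinuousLinearMap).comp
        ((lam s).comp V.toContinuousLinearMap) - σK s with hTop
    have h0 := aux_cpt s Top (hcpt s)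
    have hfnorm : ∀ x : K, ‖lam s (V (lp.single 2 x 1))‖ = 1 := by
      intro x
      have hsq : ‖lam s (V (lp.single 2 x 1))‖ ^ 2 = 1 := by
        rw [aux_norm_sq (lam s (V (lp.single 2 x 1)))]
        have h1 : ∀ t : Γ, ‖(lam s (V (lp.single 2 x 1))) t‖ ^ 2
            = ‖(V (lp.single 2 x 1)) (s⁻¹ * t)‖ ^ 2 := by
          intro t; rw [hlam s (V (lp.single 2 x 1)) t]
        rw [tsum_congr h1]
        have h2 := Equiv.tsum_eq (Equiv.mulLeft s⁻¹)
          (fun u => ‖(V (lp.single 2 x 1)) u‖ ^ 2)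
        simp only [Equiv.coe_mulLeft] at h2
        rw [h2, ← aux_norm_sq (V (lp.single 2 x 1)), ha x, one_pow]
      rw [← Real.sqrt_sq (norm_nonneg (lam s (V (lp.single 2 x 1)))), hsq, Real.sqrt_one]
    have hinner : ∀ x : K,
        (inner ℂ (lam s (V (lp.single 2 x 1))) (V (lp.single 2 (s • x) 1)) : ℂ)
          = inner ℂ (Top (lp.single 2 x 1)) (lp.single 2 (s • x) (1:ℂ)) + 1 := by
      intro x
      calc (inner ℂ (lam s (V (lp.single 2 x 1))) (V (lp.single 2 (s • x) 1)) : ℂ)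
          = inner ℂ ((ContinuousLinearMap.adjoint V.toContinuousLinearMap)
              (lam s (V (lp.single 2 x 1)))) (lp.single 2 (s • x) (1:ℂ)) :=
            (ContinuousLinearMap.adjoint_inner_left V.toContinuousLinearMap
              (lp.single 2 (s • x) (1:ℂ)) (lam s (V (lp.single 2 x 1)))).symm
        _ = inner ℂ (Top (lp.single 2 x 1) + σK s (lp.single 2 x 1))
              (lp.single 2 (s • x) (1:ℂ)) := by
            congr 1
            rw [hTop]
            simp only [ContinuousLinearMap.sub_apply, ContinuousLinearMap.comp_apply,
              LinearIsometry.coe_toContinuousLinearMap]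
            rw [sub_add_cancel]
        _ = inner ℂ (Top (lp.single 2 x 1)) (lp.single 2 (s • x) (1:ℂ))
              + inner ℂ (σK s (lp.single 2 x 1)) (lp.single 2 (s • x) (1:ℂ)) :=
            inner_add_left _ _ _
        _ = inner ℂ (Top (lp.single 2 x 1)) (lp.single 2 (s • x) (1:ℂ)) + 1 := by
            rw [hσK s x]
            congr 1
            rw [inner_self_eq_norm_sq_to_K, hnorme]
            norm_num
    have hd2 : ∀ x : K, ‖lam s (V (lp.single 2 x 1)) - V (lp.single 2 (s • x) 1)‖ ^ 2
        ≤ 2 * ‖(inner ℂ (Top (lp.single 2 x 1)) (lp.single 2 (s • x) (1:ℂ)) : ℂ)‖ := by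
      intro x
      have hns := norm_sub_sq (𝕜 := ℂ) (lam s (V (lp.single 2 x 1))) (V (lp.single 2 (s • x) 1))
      rw [hfnorm, ha, hinner] at hns
      set z : ℂ := inner ℂ (Top (lp.single 2 x 1)) (lp.single 2 (s • x) (1:ℂ)) with hz
      have hre : RCLike.re (z + 1) = RCLike.re z + 1 := by
        rw [map_add]; norm_num
      rw [hre] at hns
      have habs : |RCLike.re z| ≤ ‖z‖ := RCLike.abs_re_le_norm z
      have hdd : ‖lam s (V (lp.single 2 x 1)) - V (lp.single 2 (s • x) 1)‖ ^ 2
          = -(2 * RCLike.re z) := by rw [hns]; ring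
      rw [hdd]
      have := neg_abs_le (RCLike.re z)
      linarith
    have hd0 : Tendsto
        (fun x : K => ‖lam s (V (lp.single 2 x 1)) - V (lp.single 2 (s • x) 1)‖)
        cofinite (nhds 0) := by
      have h2 : Tendsto (fun x : K =>
          2 * ‖(inner ℂ (Top (lp.single 2 x 1)) (lp.single 2 (s • x) (1:ℂ)) : ℂ)‖)
          cofinite (nhds 0) := by
        have h3 := h0.const_mul (2 : ℝ)
        rw [mul_zero] at h3
        exact h3
      have hsqrt : Tendsto (fun x : K => Real.sqrt
          (2 * ‖(inner ℂ (Top (lp.single 2 x 1)) (lp.single 2 (s • x) (1:ℂ)) : ℂ)‖))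
          cofinite (nhds 0) := by
        have h4 := h2.sqrt
        rw [Real.sqrt_zero] at h4
        exact h4
      refine squeeze_zero (fun x => norm_nonneg _) (fun x => ?_) hsqrt
      rw [← Real.sqrt_sq (norm_nonneg
        (lam s (V (lp.single 2 x 1)) - V (lp.single 2 (s • x) 1)))]
      exact Real.sqrt_le_sqrt (hd2 x)
    have hbound : ∀ x : K, ∑' t, |μ x (s⁻¹ * t) - μ (s • x) t|
        ≤ 2 * ‖lam s (V (lp.single 2 x 1)) - V (lp.single 2 (s • x) 1)‖ := by
      intro x
      have hfun : ∀ t : Γ, |μ x (s⁻¹ * t) - μ (s • x) t|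
          = |‖(lam s (V (lp.single 2 x 1))) t‖ ^ 2 - ‖(V (lp.single 2 (s • x) 1)) t‖ ^ 2| := by
        intro t
        rw [hμ x, hμ (s • x), hlam s (V (lp.single 2 x 1)) t]
      rw [tsum_congr hfun]
      calc ∑' t : Γ, |‖(lam s (V (lp.single 2 x 1))) t‖ ^ 2
            - ‖(V (lp.single 2 (s • x) 1)) t‖ ^ 2|
          ≤ (‖lam s (V (lp.single 2 x 1))‖ + ‖V (lp.single 2 (s • x) 1)‖)
              * ‖lam s (V (lp.single 2 x 1)) - V (lp.single 2 (s • x) 1)‖ :=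
            (aux_cs (lam s (V (lp.single 2 x 1))) (V (lp.single 2 (s • x) 1))).2
        _ = 2 * ‖lam s (V (lp.single 2 x 1)) - V (lp.single 2 (s • x) 1)‖ := by
            rw [hfnorm, ha]; ring
    refine squeeze_zero (fun x => tsum_nonneg fun t => abs_nonneg _) hbound ?_
    have h5 := hd0.const_mul (2 : ℝ)
    rw [mul_zero] at h5
    exact h5
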